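/- arXiv:2011.12732 — 2 statements merged into one kernel-verified Lean document; each statement's English description precedes it below -/
import Mathlib

section
/- Let β, γ > 0 be real constants and let λ ∈ ℂ with λ ≠ 0. There exists a twice continuously differentiable function f : [0,1] → ℂ, not identically zero, satisfying f''(x) = λ² f(x) for all x ∈ (0,1), f(1) = 0, and f'(0) = (γλ + β) f(0), if and only if λ satisfies the characteristic equation λ cosh λ + (γλ + β) sinh λ = 0, equivalently e^{2λ}((1+γ)λ + β) + (1 − γ)λ − β = 0. Moreover, every twice continuously differentiable f : [0,1] → ℂ satisfying these three conditions is a scalar multiple of f_λ(x) = sinh(λ(x−1)); in particular, each nonzero eigenvalue of this boundary eigenvalue problem is geometrically simple. -/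
open Set

noncomputable def cand (l : ℂ) : ℝ → ℂ := fun x => Complex.sinh (l * (x - 1))

lemma cand_hasDerivAt (l : ℂ) (x : ℝ) :
    HasDerivAt (cand l) (l * Complex.cosh (l * ((x:ℂ) - 1))) x := by
  have h1 : HasDerivAt (fun z : ℂ => l * (z - 1)) l x := by
    simpa using ((hasDerivAt_id ((x:ℂ))).sub_const 1).const_mul l
  have h : HasDerivAt (fun z : ℂ => Complex.sinh (l * (z - 1)))
      (l * Complex.cosh (l * ((x:ℂ) - 1))) x := by
    exact ((Complex.hasDerivAt_sinh (l * ((x:ℂ) - 1))).comp (x:ℂ) h1).congr_deriv (mul_comm _ _)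
  exact h.comp_ofReal

lemma cand'_hasDerivAt (l : ℂ) (x : ℝ) :
    HasDerivAt (fun y : ℝ => l * Complex.cosh (l * ((y:ℂ) - 1)))
      (l ^ 2 * Complex.sinh (l * ((x:ℂ) - 1))) x := by
  have h1 : HasDerivAt (fun z : ℂ => l * (z - 1)) l x := by
    simpa using ((hasDerivAt_id ((x:ℂ))).sub_const 1).const_mul l
  have h : HasDerivAt (fun z : ℂ => l * Complex.cosh (l * (z - 1)))
      (l ^ 2 * Complex.sinh (l * ((x:ℂ) - 1))) x := by
    have := ((Complex.hasDerivAt_cosh (l * ((x:ℂ) - 1))).comp (x:ℂ) h1).const_mul l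
    exact this.congr_deriv (by ring)
  exact h.comp_ofReal

lemma cand_contDiff (l : ℂ) : ContDiff ℝ 2 (cand l) := by
  have h : ContDiff ℂ 2 (fun z : ℂ => Complex.sinh (l * (z - 1))) :=
    Complex.contDiff_sinh.comp (contDiff_const.mul ((contDiff_id).sub contDiff_const))
  exact (h.restrict_scalars ℝ).comp Complex.ofRealCLM.contDiff

lemma cand_deriv (l : ℂ) :
    deriv (cand l) = fun x : ℝ => l * Complex.cosh (l * ((x:ℂ) - 1)) :=
  funext fun x => (cand_hasDerivAt l x).deriv

lemma cand_deriv2 (l : ℂ) (x : ℝ) :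
    deriv (deriv (cand l)) x = l ^ 2 * cand l x := by
  rw [cand_deriv]
  exact (cand'_hasDerivAt l x).deriv

lemma exp_mul_hasDerivAt (l : ℂ) (x : ℝ) :
    HasDerivAt (fun y : ℝ => Complex.exp (l * y)) (l * Complex.exp (l * x)) x := by
  have h1 : HasDerivAt (fun z : ℂ => l * z) l x := by
    simpa using (hasDerivAt_id ((x:ℂ))).const_mul l
  have h : HasDerivAt (fun z : ℂ => Complex.exp (l * z)) (l * Complex.exp (l * (x:ℂ))) x := by
    exact ((Complex.hasDerivAt_exp (l * (x:ℂ))).comp (x:ℂ) h1).congr_deriv (mul_comm _ _)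
  exact h.comp_ofReal

lemma ode_zero (l : ℂ) (hl : l ≠ 0) (g : ℝ → ℂ) (hg : ContDiff ℝ 2 g)
    (hode : ∀ x ∈ Icc (0:ℝ) 1, deriv (deriv g) x = l ^ 2 * g x)
    (hg1 : g 1 = 0) (hg1' : deriv g 1 = 0) :
    ∀ x ∈ Icc (0:ℝ) 1, g x = 0 := by
  have hdg : Differentiable ℝ g := hg.differentiable (by norm_num)
  have hg' : ContDiff ℝ 1 (deriv g) := by
    have h2 : ContDiff ℝ (1 + 1) g := by exact_mod_cast hg
    exact (contDiff_succ_iff_deriv.mp h2).2.2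
  have hdg' : Differentiable ℝ (deriv g) := hg'.differentiable (by norm_num)
  have main : ∀ (s : ℂ), s ^ 2 = 1 →
      ∀ x ∈ Icc (0:ℝ) 1, deriv g x - s * l * g x = 0 := by
    intro s hs2 x hx
    set F : ℝ → ℂ := fun y => Complex.exp (s * l * y) * (deriv g y - s * l * g y) with hF
    have hder : ∀ y ∈ Icc (0:ℝ) 1, HasDerivAt F 0 y := by
      intro y hy
      have h1 := exp_mul_hasDerivAt (s * l) y
      have h2 : HasDerivAt (fun y : ℝ => deriv g y - s * l * g y)
          (deriv (deriv g) y - s * l * deriv g y) y :=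
        ((hdg' y).hasDerivAt).sub (((hdg y).hasDerivAt).const_mul (s * l))
      have h3 := h1.mul h2
      refine h3.congr_deriv (Eq.symm ?_)
      rw [hode y hy]
      linear_combination (Complex.exp (s * l * (y:ℂ)) * l ^ 2 * g y) * hs2
    have hFcont : Continuous F := by
      apply Continuous.mul
      · exact Complex.continuous_exp.comp (by fun_prop)
      · exact (hg'.continuous).sub (continuous_const.mul hdg.continuous)
    have hconst := constant_of_has_deriv_right_zero (a := 0) (b := 1)
      hFcont.continuousOn (fun y hy => (hder y ⟨hy.1, hy.2.le⟩).hasDerivWithinAt)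
    have hF1 : F 1 = 0 := by simp [hF, hg1, hg1']
    have hFx : F x = 0 := by
      rw [hconst x hx, ← hconst 1 (by norm_num), hF1]
    rcases mul_eq_zero.mp hFx with h | h
    · exact absurd h (Complex.exp_ne_zero _)
    · exact h
  intro x hx
  have h1 := main 1 (by norm_num) x hx
  have h2 := main (-1) (by norm_num) x hx
  have h3 : (2 : ℂ) * l * g x = 0 := by linear_combination h2 - h1
  rcases mul_eq_zero.mp h3 with h | h
  · rcases mul_eq_zero.mp h with h' | h'
    · norm_num at h'
    · exact absurd h' hl
  · exact h

lemma repr_lemma (l : ℂ) (hl : l ≠ 0) (f : ℝ → ℂ) (hf : ContDiff ℝ 2 f)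
    (hode : ∀ x ∈ Ioo (0:ℝ) 1, deriv (deriv f) x = l ^ 2 * f x)
    (hf1 : f 1 = 0) :
    ∀ x ∈ Icc (0:ℝ) 1, f x = (deriv f 1 / l) * cand l x := by
  have hdf : Differentiable ℝ f := hf.differentiable (by norm_num)
  have hf' : ContDiff ℝ 1 (deriv f) := by
    have h2 : ContDiff ℝ (1 + 1) f := by exact_mod_cast hf
    exact (contDiff_succ_iff_deriv.mp h2).2.2
  have hdf' : Differentiable ℝ (deriv f) := hf'.differentiable (by norm_num)
  -- extend ODE to closed interval
  have hode' : ∀ x ∈ Icc (0:ℝ) 1, deriv (deriv f) x = l ^ 2 * f x := by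
    have hcont1 : Continuous (deriv (deriv f)) := (contDiff_one_iff_deriv.mp hf').2
    have heq : EqOn (deriv (deriv f)) (fun x => l ^ 2 * f x) (closure (Ioo (0:ℝ) 1)) :=
      (EqOn.closure hode hcont1 (continuous_const.mul hdf.continuous))
    intro x hx
    have : x ∈ closure (Ioo (0:ℝ) 1) := by
      rw [closure_Ioo (by norm_num : (0:ℝ) ≠ 1)]; exact hx
    exact heq this
  set c : ℂ := deriv f 1 / l with hc
  set g : ℝ → ℂ := fun x => f x - c * cand l x with hgdef
  have hg : ContDiff ℝ 2 g := hf.sub (contDiff_const.mul (cand_contDiff l))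
  have hgd : ∀ x : ℝ, HasDerivAt g (deriv f x - c * (l * Complex.cosh (l * ((x:ℂ) - 1)))) x :=
    fun x => ((hdf x).hasDerivAt).sub ((cand_hasDerivAt l x).const_mul c)
  have hgderiv : deriv g = fun x : ℝ => deriv f x - c * (l * Complex.cosh (l * ((x:ℂ) - 1))) :=
    funext fun x => (hgd x).deriv
  have hgd2 : ∀ x : ℝ, deriv (deriv g) x = deriv (deriv f) x - c * (l ^ 2 * cand l x) := by
    intro x
    rw [hgderiv]
    have h1 : HasDerivAt (fun y : ℝ => deriv f y - c * (l * Complex.cosh (l * ((y:ℂ) - 1))))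
        (deriv (deriv f) x - c * (l ^ 2 * Complex.sinh (l * ((x:ℂ) - 1)))) x :=
      ((hdf' x).hasDerivAt).sub ((cand'_hasDerivAt l x).const_mul c)
    exact h1.deriv
  have hode'' : ∀ x ∈ Icc (0:ℝ) 1, deriv (deriv g) x = l ^ 2 * g x := by
    intro x hx
    rw [hgd2, hode' x hx, hgdef]
    ring
  have hg1 : g 1 = 0 := by
    simp [hgdef, hf1, cand]
  have hg1' : deriv g 1 = 0 := by
    rw [hgderiv]
    simp only [Complex.ofReal_one, sub_self, mul_zero, Complex.cosh_zero, mul_one]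
    rw [hc]
    field_simp
    ring
  have := ode_zero l hl g hg hode'' hg1 hg1'
  intro x hx
  have h := this x hx
  rw [hgdef] at h
  simp only [] at h
  linear_combination h

lemma sinh_zero_char {w : ℂ} (h : Complex.sinh w = 0) : ∃ k : ℤ, w = -(k * Real.pi * Complex.I) := by
  have hs : Complex.sin (w * Complex.I) = 0 := by
    rw [Complex.sin_mul_I, h, zero_mul]
  obtain ⟨k, hk⟩ := Complex.sin_eq_zero_iff.mp hs
  refine ⟨k, ?_⟩
  have : w * Complex.I * Complex.I = (k * Real.pi) * Complex.I := by rw [hk]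
  rw [mul_assoc, Complex.I_mul_I] at this
  linear_combination -this

lemma exists_sinh_ne (l : ℂ) (hl : l ≠ 0) :
    ∃ x ∈ Icc (0:ℝ) 1, Complex.sinh (l * ((x:ℂ) - 1)) ≠ 0 := by
  by_cases h0 : Complex.sinh (l * (((0:ℝ):ℂ) - 1)) = 0
  · obtain ⟨k, hk⟩ := sinh_zero_char h0
    have hlk : l = k * Real.pi * Complex.I := by
      push_cast at hk
      linear_combination -hk
    have hk0 : (k : ℤ) ≠ 0 := by
      rintro rfl
      apply hl
      simp [hlk]
    set x : ℝ := 1 - Real.sqrt 2 / 2 with hx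
    have hs2pos : 0 < Real.sqrt 2 := Real.sqrt_pos.mpr (by norm_num)
    have hs2lt : Real.sqrt 2 < 2 := by
      nlinarith [Real.sq_sqrt (show (0:ℝ) ≤ 2 by norm_num), Real.sqrt_nonneg 2]
    refine ⟨x, ⟨by simp only [hx]; linarith, by simp only [hx]; linarith⟩, ?_⟩
    intro hzero
    obtain ⟨m, hm⟩ := sinh_zero_char hzero
    have hxc : ((x:ℝ):ℂ) - 1 = -(((Real.sqrt 2 : ℝ):ℂ) / 2) := by
      rw [hx]; push_cast; ring
    rw [hxc, hlk] at hm
    have hπI : ((Real.pi : ℝ) : ℂ) * Complex.I ≠ 0 :=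
      mul_ne_zero (by exact_mod_cast Real.pi_ne_zero) Complex.I_ne_zero
    have hcan : (((Real.sqrt 2 * k : ℝ)) : ℂ) * (Real.pi * Complex.I)
        = (((2 * m : ℝ)) : ℂ) * (Real.pi * Complex.I) := by
      push_cast
      linear_combination (-2 : ℂ) * hm
    have hreal : Real.sqrt 2 * k = 2 * m := by
      have := mul_right_cancel₀ hπI hcan
      exact_mod_cast this
    have hk0' : ((k:ℤ):ℝ) ≠ 0 := Int.cast_ne_zero.mpr hk0
    apply irrational_sqrt_two
    refine ⟨(2 * m) / k, ?_⟩
    push_cast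
    rw [div_eq_iff hk0']
    linarith
  · exact ⟨0, by norm_num, h0⟩

/-- eigenvalue problem for the operator 𝔸:
`f'' = λ²f` on `(0,1)`, `f(1) = 0`, `f'(0) = (γλ+β)f(0)`, for `λ ≠ 0`.
A nonzero C² solution exists iff `λ cosh λ + (γλ+β) sinh λ = 0`
(equivalently `e^{2λ}((1+γ)λ+β) + (1-γ)λ - β = 0`), and every solution
is a scalar multiple of `f_λ(x) = sinh(λ(x-1))`. -/
theorem stmt8 (β γ : ℝ) (hβ : 0 < β) (hγ : 0 < γ) (l : ℂ) (hl : l ≠ 0) :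
    ((∃ f : ℝ → ℂ, ContDiff ℝ 2 f ∧
        (∃ x ∈ Icc (0:ℝ) 1, f x ≠ 0) ∧
        (∀ x ∈ Ioo (0:ℝ) 1, deriv (deriv f) x = l ^ 2 * f x) ∧
        f 1 = 0 ∧
        deriv f 0 = (γ * l + β) * f 0) ↔
      l * Complex.cosh l + (γ * l + β) * Complex.sinh l = 0) ∧
    ((l * Complex.cosh l + (γ * l + β) * Complex.sinh l = 0) ↔
      Complex.exp (2 * l) * ((1 + γ) * l + β) + (1 - γ) * l - β = 0) ∧
    (∀ f : ℝ → ℂ, ContDiff ℝ 2 f →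
        (∀ x ∈ Ioo (0:ℝ) 1, deriv (deriv f) x = l ^ 2 * f x) →
        f 1 = 0 →
        deriv f 0 = (γ * l + β) * f 0 →
        ∃ c : ℂ, ∀ x ∈ Icc (0:ℝ) 1,
          f x = c * Complex.sinh (l * (x - 1))) := by
  have key : Complex.exp (2 * l) * ((1 + γ) * l + β) + (1 - γ) * l - β
      = 2 * Complex.exp l * (l * Complex.cosh l + (γ * l + β) * Complex.sinh l) := by
    simp only [Complex.cosh, Complex.sinh, Complex.exp_neg]
    rw [two_mul, Complex.exp_add]
    field_simp
    ring
  have iff2 : (l * Complex.cosh l + (γ * l + β) * Complex.sinh l = 0) ↔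
      Complex.exp (2 * l) * ((1 + γ) * l + β) + (1 - γ) * l - β = 0 := by
    rw [key]
    constructor
    · intro h; rw [h, mul_zero]
    · intro h
      rcases mul_eq_zero.mp h with h' | h'
      · rcases mul_eq_zero.mp h' with h'' | h''
        · norm_num at h''
        · exact absurd h'' (Complex.exp_ne_zero l)
      · exact h'
  have h0l : l * (((0:ℝ):ℂ) - 1) = -l := by push_cast; ring
  refine ⟨?_, iff2, ?_⟩
  · constructor
    · rintro ⟨f, hf, ⟨x₀, hx₀, hfx₀⟩, hode, hf1, hbc⟩
      have hrep := repr_lemma l hl f hf hode hf1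
      set c : ℂ := deriv f 1 / l with hc
      have hcne : c ≠ 0 := by
        intro h
        apply hfx₀
        rw [hrep x₀ hx₀, h, zero_mul]
      have hU : UniqueDiffWithinAt ℝ (Icc (0:ℝ) 1) 0 :=
        uniqueDiffOn_Icc_zero_one 0 (by norm_num)
      have e1 : derivWithin f (Icc (0:ℝ) 1) 0 = deriv f 0 :=
        (hf.differentiable (by norm_num) 0).derivWithin hU
      have e2 : derivWithin f (Icc (0:ℝ) 1) 0
          = derivWithin (fun x => c * cand l x) (Icc (0:ℝ) 1) 0 :=
        derivWithin_congr hrep (hrep 0 (by norm_num))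
      have e3 : derivWithin (fun x => c * cand l x) (Icc (0:ℝ) 1) 0
          = c * (l * Complex.cosh (l * (((0:ℝ):ℂ) - 1))) :=
        (((cand_hasDerivAt l 0).const_mul c).hasDerivWithinAt).derivWithin hU
      have hd0 : deriv f 0 = c * (l * Complex.cosh (-l)) := by
        rw [← e1, e2, e3, h0l]
      have hf0 : f 0 = c * Complex.sinh (-l) := by
        rw [hrep 0 (by norm_num)]
        unfold cand
        rw [h0l]
      rw [hd0, hf0, Complex.cosh_neg, Complex.sinh_neg] at hbc
      have hz : c * (l * Complex.cosh l + (γ * l + β) * Complex.sinh l) = 0 := by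
        linear_combination hbc
      rcases mul_eq_zero.mp hz with h | h
      · exact absurd h hcne
      · exact h
    · intro hchar
      refine ⟨cand l, cand_contDiff l, ?_, ?_, ?_, ?_⟩
      · obtain ⟨x, hx, hne⟩ := exists_sinh_ne l hl
        exact ⟨x, hx, hne⟩
      · intro x _; exact cand_deriv2 l x
      · unfold cand; push_cast; norm_num
      · rw [(cand_hasDerivAt l 0).deriv]
        show l * Complex.cosh (l * (((0:ℝ):ℂ) - 1)) = (γ * l + β) * cand l 0
        unfold cand
        rw [h0l, Complex.cosh_neg, Complex.sinh_neg]
        linear_combination hchar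
  · intro f hf hode hf1 _
    exact ⟨deriv f 1 / l, fun x hx => by
      simpa [cand] using repr_lemma l hl f hf hode hf1 x hx⟩
end

section
/- Let m, a, α, β, γ > 0 be real constants and let λ ∈ ℂ. There exist twice continuously differentiable functions f, φ : [0,1] → ℂ, not both identically zero, satisfying f''(x) = λ² f(x) and φ''(x) = λ² φ(x) for all x ∈ (0,1), f(0) = 0, (1 + aλ) f'(1) + λ(α + mλ) f(1) = −λ(α φ(1) + a φ'(1)), φ'(0) = (γλ + β) φ(0), and φ'(1) + mλ² φ(1) = 0, if and only if at least one of the following two characteristic equations holds: e^{2λ}(1 + α + (a+m)λ) + (1 − α) + (a − m)λ = 0, or e^{2λ}((1+γ)λ + β)(1 + mλ) = ((1−γ)λ − β)(1 − mλ). -/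
open Set


noncomputable def sol (l P Q : ℂ) : ℝ → ℂ :=
  fun x => P * Complex.exp (l * x) + Q * Complex.exp (-l * x)

lemma expDeriv (c : ℂ) (x : ℝ) :
    HasDerivAt (fun y : ℝ => Complex.exp (c * y)) (c * Complex.exp (c * x)) x := by
  have h : HasDerivAt (fun y : ℝ => c * (y : ℂ)) (c * 1) x :=
    (Complex.ofRealCLM.hasDerivAt).const_mul c
  simpa [mul_comm] using h.cexp

lemma sol_hasDerivAt (l P Q : ℂ) (x : ℝ) :
    HasDerivAt (sol l P Q) (sol l (l * P) (-(l * Q)) x) x := by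
  have h := ((expDeriv l x).const_mul P).add ((expDeriv (-l) x).const_mul Q)
  have hval : sol l (l * P) (-(l * Q)) x
      = P * (l * Complex.exp (l * ↑x)) + Q * (-l * Complex.exp (-l * ↑x)) := by
    simp only [sol]; ring
  rw [hval]
  exact h

lemma sol_deriv (l P Q : ℂ) : deriv (sol l P Q) = sol l (l * P) (-(l * Q)) :=
  funext fun x => (sol_hasDerivAt l P Q x).deriv

lemma sol_contDiff (l P Q : ℂ) : ContDiff ℝ 2 (sol l P Q) := by
  have h : ∀ c : ℂ, ContDiff ℝ 2 (fun x : ℝ => Complex.exp (c * x)) := by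
    intro c
    exact Complex.contDiff_exp.comp (contDiff_const.mul Complex.ofRealCLM.contDiff)
  exact (contDiff_const.mul (h l)).add (contDiff_const.mul (h (-l)))

lemma sol_ode (l P Q : ℂ) (x : ℝ) :
    deriv (deriv (sol l P Q)) x = l ^ 2 * sol l P Q x := by
  rw [sol_deriv, sol_deriv]
  simp only [sol]
  ring

lemma const_on {F : ℝ → ℂ} (hF : ∀ x ∈ Icc (0:ℝ) 1, HasDerivAt F 0 x) :
    ∀ x ∈ Icc (0:ℝ) 1, F x = F 0 := by
  apply constant_of_has_deriv_right_zero
  · exact fun x hx => (hF x hx).continuousAt.continuousWithinAt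
  · exact fun x hx => (hF x (Ico_subset_Icc_self hx)).hasDerivWithinAt

lemma key (l μ : ℂ) (hμ : μ ^ 2 = l ^ 2) (g : ℝ → ℂ) (hg : ContDiff ℝ 2 g)
    (hode : ∀ x ∈ Ioo (0:ℝ) 1, deriv (deriv g) x = l ^ 2 * g x) :
    ∀ x ∈ Icc (0:ℝ) 1,
      (deriv g x - μ * g x) * Complex.exp (μ * x) = deriv g 0 - μ * g 0 := by
  have h2 : ContDiff ℝ (1 + 1) g := by norm_num; exact hg
  obtain ⟨hdiff, -, hg'⟩ := contDiff_succ_iff_deriv.mp h2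
  have hdiff' : Differentiable ℝ (deriv g) := hg'.differentiable one_ne_zero
  have hcont2 : Continuous (deriv (deriv g)) := hg'.continuous_deriv le_rfl
  have hode' : ∀ x ∈ Icc (0:ℝ) 1, deriv (deriv g) x = l ^ 2 * g x := by
    have hEq : EqOn (deriv (deriv g)) (fun x => l ^ 2 * g x) (closure (Ioo (0:ℝ) 1)) :=
      EqOn.closure (fun x hx => hode x hx) hcont2 (continuous_const.mul hdiff.continuous)
    rw [closure_Ioo zero_ne_one] at hEq
    exact fun x hx => hEq hx
  have hH : ∀ x ∈ Icc (0:ℝ) 1,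
      HasDerivAt (fun y : ℝ => (deriv g y - μ * g y) * Complex.exp (μ * y)) 0 x := by
    intro x hx
    have h1 : HasDerivAt g (deriv g x) x := (hdiff x).hasDerivAt
    have h2' : HasDerivAt (deriv g) (deriv (deriv g) x) x := (hdiff' x).hasDerivAt
    have h3 : HasDerivAt (fun y : ℝ => (deriv g y - μ * g y) * Complex.exp (μ * y))
        ((deriv (deriv g) x - μ * deriv g x) * Complex.exp (μ * x)
          + (deriv g x - μ * g x) * (μ * Complex.exp (μ * x))) x :=
      (h2'.sub (h1.const_mul μ)).mul (expDeriv μ x)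
    convert h3 using 1
    rw [hode' x hx]
    have hμμ : l ^ 2 = μ * μ := by rw [← hμ]; ring
    rw [hμμ]
    ring
  have hc := const_on hH
  intro x hx
  have hx0 := hc x hx
  simpa using hx0


/-- eigenvalue problem for the closed-loop operator 𝒜, a coupled
pair of boundary value problems for `f` (plant) and `φ` (observer error).
A not-both-zero C² solution pair exists iff λ satisfies the characteristic
equation of A or that of A₂. -/
theorem stmt14 (m a α β γ : ℝ) (hm : 0 < m) (ha : 0 < a) (hα : 0 < α)
    (hβ : 0 < β) (hγ : 0 < γ) (l : ℂ) :
    (∃ f φ : ℝ → ℂ, ContDiff ℝ 2 f ∧ ContDiff ℝ 2 φ ∧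
        (∃ x ∈ Icc (0:ℝ) 1, f x ≠ 0 ∨ φ x ≠ 0) ∧
        (∀ x ∈ Ioo (0:ℝ) 1, deriv (deriv f) x = l ^ 2 * f x) ∧
        (∀ x ∈ Ioo (0:ℝ) 1, deriv (deriv φ) x = l ^ 2 * φ x) ∧
        f 0 = 0 ∧
        (1 + a * l) * deriv f 1 + l * (α + m * l) * f 1
          = -(l * (α * φ 1 + a * deriv φ 1)) ∧
        deriv φ 0 = (γ * l + β) * φ 0 ∧
        deriv φ 1 + m * l ^ 2 * φ 1 = 0) ↔
    (Complex.exp (2 * l) * (1 + α + (a + m) * l) + (1 - α) + (a - m) * l = 0 ∨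
      Complex.exp (2 * l) * ((1 + γ) * l + β) * (1 + m * l)
        = ((1 - γ) * l - β) * (1 - m * l)) := by
  have hE : Complex.exp l * Complex.exp (-l) = 1 := by
    rw [← Complex.exp_add]; simp
  have h2E : Complex.exp (2 * l) = Complex.exp l * Complex.exp l := by
    rw [two_mul, Complex.exp_add]
  constructor
  · rintro ⟨f, φ, hf, hφ, ⟨x₀, hx₀, hw⟩, hof, hoφ, hf0, hbc1, hbc2, hbc3⟩
    by_contra hcon
    push_neg at hcon
    obtain ⟨h1, h2⟩ := hcon
    by_cases hl : l = 0
    · subst hl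
      have kf := key 0 0 (by ring) f hf hof
      have kφ := key 0 0 (by ring) φ hφ hoφ
      have kf' : ∀ x ∈ Icc (0:ℝ) 1, deriv f x = deriv f 0 := by
        intro x hx; have := kf x hx; simpa using this
      have kφ' : ∀ x ∈ Icc (0:ℝ) 1, deriv φ x = deriv φ 0 := by
        intro x hx; have := kφ x hx; simpa using this
      have hdf1 : deriv f 1 = 0 := by
        have : (1 + (a:ℂ) * 0) * deriv f 1 = 0 := by linear_combination hbc1
        simpa using this
      have hdf0 : deriv f 0 = 0 := by rw [← kf' 1 (by norm_num), hdf1]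
      have hdφ1 : deriv φ 1 = 0 := by
        have := hbc3; simpa using this
      have hdφ0 : deriv φ 0 = 0 := by rw [← kφ' 1 (by norm_num), hdφ1]
      have hφ0 : φ 0 = 0 := by
        have hb : (0:ℂ) = (β:ℂ) * φ 0 := by
          have := hbc2; rw [hdφ0] at this; linear_combination this
        have hβ' : (β:ℂ) ≠ 0 := by exact_mod_cast hβ.ne'
        field_simp at hb
        exact (mul_eq_zero.mp hb.symm).resolve_left hβ'
      have hfc : ∀ x ∈ Icc (0:ℝ) 1, f x = f 0 := by
        apply const_on
        intro x hx
        have hd := (hf.differentiable (by norm_num) x).hasDerivAt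
        rw [kf' x hx, hdf0] at hd
        exact hd
      have hφc : ∀ x ∈ Icc (0:ℝ) 1, φ x = φ 0 := by
        apply const_on
        intro x hx
        have hd := (hφ.differentiable (by norm_num) x).hasDerivAt
        rw [kφ' x hx, hdφ0] at hd
        exact hd
      rcases hw with h | h
      · exact h (by rw [hfc x₀ hx₀, hf0])
      · exact h (by rw [hφc x₀ hx₀, hφ0])
    · -- l ≠ 0
      have kfp := key l l rfl f hf hof
      have kfm := key l (-l) (by ring) f hf hof
      have kphp := key l l rfl φ hφ hoφ
      have kphm := key l (-l) (by ring) φ hφ hoφ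
      have hφ1 := kphp 1 (by norm_num)
      have hφ2 := kphm 1 (by norm_num)
      simp only [Complex.ofReal_one, mul_one] at hφ1 hφ2
      rw [hbc2] at hφ1 hφ2
      have hu : Complex.exp (2*l) * ((1+(γ:ℂ))*l + β) * (1+(m:ℂ)*l) * φ 0
          = ((1-(γ:ℂ))*l - β)*(1-(m:ℂ)*l) * φ 0 := by
        rw [h2E]
        linear_combination (-(1-(m:ℂ)*l)) * hφ1
          + (-(Complex.exp l * Complex.exp l * (1+(m:ℂ)*l))) * hφ2
          + (2*Complex.exp l) * hbc3
          + (Complex.exp l * (1+(m:ℂ)*l) * (deriv φ 1 + l * φ 1)) * hE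
      have hu0 : φ 0 = 0 := by
        by_contra hne
        exact h2 (mul_right_cancel₀ hne hu)
      have hφz : ∀ x ∈ Icc (0:ℝ) 1, φ x = 0 ∧ deriv φ x = 0 := by
        intro x hx
        have p := kphp x hx
        have q := kphm x hx
        rw [hbc2, hu0] at p q
        have hp : deriv φ x - l * φ x = 0 := by
          have := mul_eq_zero.mp (by rw [p]; ring : (deriv φ x - l * φ x) * Complex.exp (l*x) = 0)
          rcases this with h | h
          · exact h
          · exact absurd h (Complex.exp_ne_zero _)
        have hq : deriv φ x + l * φ x = 0 := by
          have := mul_eq_zero.mp (by rw [q]; ring : (deriv φ x - (-l) * φ x) * Complex.exp (-l*x) = 0)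
          rcases this with h | h
          · linear_combination h
          · exact absurd h (Complex.exp_ne_zero _)
        have hφx : φ x = 0 := by
          have h2l : (2:ℂ) * l * φ x = 0 := by linear_combination hq - hp
          rcases mul_eq_zero.mp h2l with h | h
          · rcases mul_eq_zero.mp h with h' | h'
            · norm_num at h'
            · exact absurd h' hl
          · exact h
        exact ⟨hφx, by linear_combination hp + l * hφx⟩
      obtain ⟨hφ1z, hdφ1z⟩ := hφz 1 (by norm_num)
      have hf1 := kfp 1 (by norm_num)
      have hf2 := kfm 1 (by norm_num)
      simp only [Complex.ofReal_one, mul_one] at hf1 hf2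
      rw [hf0] at hf1 hf2
      rw [hφ1z, hdφ1z] at hbc1
      have hs : (Complex.exp (2*l)*(1+(α:ℂ)+((a:ℂ)+m)*l) + (1-(α:ℂ)) + ((a:ℂ)-m)*l) * deriv f 0 = 0 := by
        rw [h2E]
        linear_combination (-(1-(α:ℂ)+((a:ℂ)-m)*l)) * hf1
          + (-(Complex.exp l * Complex.exp l * (1+(α:ℂ)+((a:ℂ)+m)*l))) * hf2
          + (2*Complex.exp l) * hbc1
          + (Complex.exp l * (1+(α:ℂ)+((a:ℂ)+m)*l) * (deriv f 1 + l * f 1)) * hE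
      have hs0 : deriv f 0 = 0 := by
        rcases mul_eq_zero.mp hs with h | h
        · exact absurd h h1
        · exact h
      have hfx : f x₀ = 0 := by
        have p := kfp x₀ hx₀
        have q := kfm x₀ hx₀
        rw [hf0, hs0] at p q
        have hp : deriv f x₀ - l * f x₀ = 0 := by
          have := mul_eq_zero.mp (by rw [p]; ring : (deriv f x₀ - l * f x₀) * Complex.exp (l*x₀) = 0)
          rcases this with h | h
          · exact h
          · exact absurd h (Complex.exp_ne_zero _)
        have hq : deriv f x₀ + l * f x₀ = 0 := by
          have := mul_eq_zero.mp (by rw [q]; ring : (deriv f x₀ - (-l) * f x₀) * Complex.exp (-l*x₀) = 0)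
          rcases this with h | h
          · linear_combination h
          · exact absurd h (Complex.exp_ne_zero _)
        have h2l : (2:ℂ) * l * f x₀ = 0 := by linear_combination hq - hp
        rcases mul_eq_zero.mp h2l with h | h
        · rcases mul_eq_zero.mp h with h' | h'
          · norm_num at h'
          · exact absurd h' hl
        · exact h
      rcases hw with h | h
      · exact h hfx
      · exact h (hφz x₀ hx₀).1
  · -- backward
    intro hcase
    have con1 : Complex.exp (2 * l) * (1 + α + (a + m) * l) + (1 - α) + (a - m) * l = 0 →
        (∃ f φ : ℝ → ℂ, ContDiff ℝ 2 f ∧ ContDiff ℝ 2 φ ∧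
        (∃ x ∈ Icc (0:ℝ) 1, f x ≠ 0 ∨ φ x ≠ 0) ∧
        (∀ x ∈ Ioo (0:ℝ) 1, deriv (deriv f) x = l ^ 2 * f x) ∧
        (∀ x ∈ Ioo (0:ℝ) 1, deriv (deriv φ) x = l ^ 2 * φ x) ∧
        f 0 = 0 ∧
        (1 + a * l) * deriv f 1 + l * (α + m * l) * f 1
          = -(l * (α * φ 1 + a * deriv φ 1)) ∧
        deriv φ 0 = (γ * l + β) * φ 0 ∧
        deriv φ 1 + m * l ^ 2 * φ 1 = 0) := by
      intro h1
      have hl : l ≠ 0 := by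
        rintro rfl
        rw [mul_zero, Complex.exp_zero] at h1
        have : (2:ℂ) = 0 := by linear_combination h1
        norm_num at this
      rw [h2E] at h1
      refine ⟨sol l 1 (-1), fun _ => 0, sol_contDiff l 1 (-1), contDiff_const,
        ⟨1, by norm_num, Or.inl ?_⟩, fun x _ => sol_ode l 1 (-1) x,
        fun x _ => by simp, by simp [sol], ?_, by simp, by simp⟩
      · -- witness : sol l 1 (-1) 1 ≠ 0
        intro hzero
        simp only [sol, Complex.ofReal_one, mul_one, one_mul, neg_one_mul, neg_mul] at hzero
        have hx : Complex.exp l = Complex.exp (-l) := by linear_combination hzero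
        have hexp1 : Complex.exp (2*l) = 1 := by
          rw [h2E]
          nth_rewrite 2 [hx]
          exact hE
        rw [h2E] at hexp1
        have h1' : (2:ℂ) + 2*(a:ℂ)*l = 0 := by
          rw [hexp1] at h1
          linear_combination h1
        rw [← h2E] at hexp1
        obtain ⟨n, hn⟩ := Complex.exp_eq_one_iff.mp hexp1
        have hl' : l = (n:ℂ) * (Real.pi:ℂ) * Complex.I := by linear_combination hn / 2
        rw [hl'] at h1'
        have hre := congrArg Complex.re h1'
        simp [Complex.add_re, Complex.mul_re, Complex.mul_im, Complex.I_re, Complex.I_im] at hre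
      · -- plant BC
        rw [sol_deriv]
        simp only [sol, Complex.ofReal_one, mul_one, one_mul, mul_neg, neg_neg, mul_one,
          deriv_const', mul_zero, add_zero, neg_zero]
        linear_combination (l*Complex.exp (-l)) * h1
          - (l*Complex.exp l*(1+(α:ℂ)+((a:ℂ)+m)*l)) * hE
    rcases hcase with h1 | h2
    · exact con1 h1
    · by_cases hE1 : Complex.exp (2 * l) * (1 + α + (a + m) * l) + (1 - α) + (a - m) * l = 0
      · exact con1 hE1
      · have hl : l ≠ 0 := by
          rintro rfl
          rw [mul_zero, Complex.exp_zero] at h2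
          have : (β:ℂ) = 0 := by linear_combination h2 / 2
          exact hβ.ne' (by exact_mod_cast this)
        rw [h2E] at h2 hE1
        set P : ℂ := (1+(γ:ℂ))*l + β with hP
        set Q : ℂ := (1-(γ:ℂ))*l - β with hQ
        set E₁ : ℂ := Complex.exp l * Complex.exp l * (1+(α:ℂ)+((a:ℂ)+m)*l) + (1-(α:ℂ)) + ((a:ℂ)-m)*l with hE₁def
        set c : ℂ := -(l * ((α:ℂ) * (P * Complex.exp l + Q * Complex.exp (-l))
          + (a:ℂ) * (l*P*Complex.exp l + (-(l*Q))*Complex.exp (-l)))) with hc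
        set C : ℂ := c * Complex.exp l / (l * E₁) with hC
        refine ⟨sol l C (-C), sol l P Q, sol_contDiff l C (-C), sol_contDiff l P Q,
          ⟨0, by norm_num, Or.inr ?_⟩, fun x _ => sol_ode l C (-C) x,
          fun x _ => sol_ode l P Q x, by simp [sol], ?_, ?_, ?_⟩
        · -- witness φ 0 = 2l ≠ 0
          have h0 : sol l P Q 0 = 2*l := by
            simp only [sol, Complex.ofReal_zero, mul_zero, neg_zero, Complex.exp_zero, mul_one]
            rw [hP, hQ]; ring
          rw [h0]
          exact mul_ne_zero two_ne_zero hl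
        · -- plant BC
          rw [sol_deriv, sol_deriv]
          simp only [sol, Complex.ofReal_one, mul_one]
          have hKE : Complex.exp l * ((1+(a:ℂ)*l)*(Complex.exp l + Complex.exp (-l))
              + ((α:ℂ)+(m:ℂ)*l)*(Complex.exp l - Complex.exp (-l))) = E₁ := by
            rw [hE₁def]
            linear_combination (1-(α:ℂ)+((a:ℂ)-(m:ℂ))*l) * hE
          have hCl : C * (l * E₁) = c * Complex.exp l := by
            rw [hC]
            exact div_mul_cancel₀ _ (mul_ne_zero hl hE1)
          linear_combination (Complex.exp (-l)*C*l) * hKE + Complex.exp (-l) * hCl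
            - (C*l*((1+(a:ℂ)*l)*(Complex.exp l + Complex.exp (-l))
              + ((α:ℂ)+(m:ℂ)*l)*(Complex.exp l - Complex.exp (-l))) - c) * hE + hc
        · -- observer BC at 0
          rw [sol_deriv]
          simp only [sol, Complex.ofReal_zero, mul_zero, neg_zero, Complex.exp_zero, mul_one]
          rw [hP, hQ]; ring
        · -- observer BC at 1
          rw [sol_deriv]
          simp only [sol, Complex.ofReal_one, mul_one]
          linear_combination (l*Complex.exp (-l)) * h2
            - (l*Complex.exp l*(1+(m:ℂ)*l)*P) * hE
end
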